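/- Let H be a β-acyclic hypergraph with a β-elimination ordering ≤ of V(H) and induced lexicographic ordering ≤_H on hyperedges. Let e ∈ H, x ∈ V(H) and w ∈ V(H) with x ≤ w, and let H' := H_e^x \ (H_e^x(x) ∩ H_e^x(w)). If y is a vertex with y < x and f ∈ H is a hyperedge such that H_f^y ⊆ H', then {x, w} ∩ V(H_f^y) ≠ {x, w}, i.e., x and w are not both vertices of H_f^y. -/

import Mathlib

variable {α : Type*} [LinearOrder α]

/-- The vertex set `V(H)` of a hypergraph `H`: the union of its hyperedges. -/
def verts (H : Finset (Finset α)) : Finset α := H.sup id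

/-- The linear order on `α` is a `β`-elimination ordering of `H`: for every vertex `x`,
the set `{e ∩ [≥ x] | e ∈ H, x ∈ e}` is linearly ordered by inclusion (so that `H` is
`β`-acyclic, witnessed by this ordering). -/
def IsBetaElimOrder (H : Finset (Finset α)) : Prop :=
  ∀ x : α, ∀ e ∈ H, ∀ f ∈ H, x ∈ e → x ∈ f →
    e.filter (x ≤ ·) ⊆ f.filter (x ≤ ·) ∨ f.filter (x ≤ ·) ⊆ e.filter (x ≤ ·)

/-- The induced lexicographic ordering `≤_H` on hyperedges:
`e ≤_H f` iff `e = f` or `min((e \ f) ∪ (f \ e)) ∈ e`. -/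
def edgeLE (e f : Finset α) : Prop :=
  e = f ∨ ∃ m ∈ e, ((e \ f) ∪ (f \ e)).min = (m : WithTop α)

/-- One step of a walk in `H` going only through hyperedges `≤_H e` and vertices `≤ x`. -/
def StepBelow (H : Finset (Finset α)) (e : Finset α) (x : α) (g h : Finset α) : Prop :=
  g ∈ H ∧ h ∈ H ∧ edgeLE g e ∧ edgeLE h e ∧ ∃ v ∈ g ∩ h, v ≤ x

open Classical in
/-- `H_e^x`: the sub-hypergraph of `H` formed by `e` together with the hyperedges `f ∈ H`
connected to `e` by a walk going only through hyperedges `≤_H e` and vertices `≤ x`. -/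
noncomputable def Hex (H : Finset (Finset α)) (e : Finset α) (x : α) : Finset (Finset α) :=
  H.filter fun f => edgeLE f e ∧ Relation.ReflTransGen (StepBelow H e x) f e

section Helpers

variable {α : Type*} [LinearOrder α]

/-- getD of eraseIdx. -/
private lemma getD_eraseIdx (l : List (Finset α)) (j i : ℕ) (hj : j < l.length)
    (hi : i + 1 < l.length) :
    (l.eraseIdx j).getD i ∅ = if i < j then l.getD i ∅ else l.getD (i+1) ∅ := by
  have hlen : (l.eraseIdx j).length = l.length - 1 := by
    rw [List.length_eraseIdx]; simp [hj]
  have hi' : i < (l.eraseIdx j).length := by omega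
  rw [List.getD_eq_getElem _ _ hi', List.getElem_eraseIdx]
  split
  · rw [List.getD_eq_getElem _ _ (by omega)]
  · rw [List.getD_eq_getElem _ _ (by omega)]

private lemma getD_mem (l : List (Finset α)) (i : ℕ) (hi : i < l.length) :
    l.getD i ∅ ∈ l := by
  rw [List.getD_eq_getElem _ _ hi]; exact List.getElem_mem _

/-- The key combinatorial lemma: along a walk whose connecting vertices are all `≤ y`,
if `x > y` is in the first edge and `w > y` is in the last edge, then some edge of the
walk contains both. -/
private lemma chain_both (H : Finset (Finset α)) (hβ : IsBetaElimOrder H)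
    (y x w : α) (hyx : y < x) (hyw : y < w) :
    ∀ n (es : List (Finset α)), es.length = n → 0 < es.length →
      (∀ g ∈ es, g ∈ H) →
      (∀ i, i + 1 < es.length → ∃ v, v ∈ es.getD i ∅ ∧ v ∈ es.getD (i+1) ∅ ∧ v ≤ y) →
      x ∈ es.getD 0 ∅ → w ∈ es.getD (es.length - 1) ∅ →
      ∃ g ∈ es, x ∈ g ∧ w ∈ g := by
  intro n
  induction n using Nat.strong_induction_on with
  | _ n ih =>
  intro es hlen hpos hH hadj hx hw
  by_cases h1 : es.length = 1
  · refine ⟨es.getD 0 ∅, getD_mem es 0 hpos, hx, ?_⟩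
    rw [h1] at hw; simpa using hw
  -- now es.length ≥ 2
  have hk2 : 2 ≤ es.length := by omega
  -- skolemize the connecting vertices
  have hv' : ∀ i : ℕ, ∃ v : α,
      i + 1 < es.length → (v ∈ es.getD i ∅ ∧ v ∈ es.getD (i+1) ∅ ∧ v ≤ y) := by
    intro i
    by_cases h : i + 1 < es.length
    · obtain ⟨v, hv⟩ := hadj i h; exact ⟨v, fun _ => hv⟩
    · exact ⟨y, fun h' => absurd h' h⟩
  choose v hv using hv'
  -- pick the step with the minimal connecting vertex
  obtain ⟨j, hjmem, hjmin⟩ := Finset.exists_min_image (Finset.range (es.length - 1)) v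
    ⟨0, by rw [Finset.mem_range]; omega⟩
  rw [Finset.mem_range] at hjmem
  have hj1 : j + 1 < es.length := by omega
  obtain ⟨hva, hvb, hvy⟩ := hv j hj1
  set a := es.getD j ∅ with ha
  set b := es.getD (j+1) ∅ with hb
  have haH : a ∈ H := hH _ (getD_mem es j (by omega))
  have hbH : b ∈ H := hH _ (getD_mem es (j+1) hj1)
  have hmin : ∀ i, i + 1 < es.length → v j ≤ v i := by
    intro i hi
    exact hjmin i (Finset.mem_range.mpr (by omega))
  rcases hβ (v j) a haH b hbH hva hvb with hcase | hcase
  · -- tail of a included in tail of b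
    have key : ∀ u ∈ a, v j ≤ u → u ∈ b := by
      intro u hu hvu
      have := hcase (Finset.mem_filter.mpr ⟨hu, hvu⟩)
      exact (Finset.mem_filter.mp this).1
    by_cases hj0 : j = 0
    · -- drop the first edge
      obtain ⟨e0, t, rfl⟩ : ∃ e0 t, es = e0 :: t := by
        cases es with
        | nil => simp at hpos
        | cons e0 t => exact ⟨e0, t, rfl⟩
      subst hj0
      have hxb : x ∈ b := key x (by simpa [ha] using hx) (le_of_lt (lt_of_le_of_lt hvy hyx))
      have ht : 0 < t.length := by simp at hk2 ⊢; omega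
      obtain ⟨g, hg, hgx, hgw⟩ := ih t.length (by simp [← hlen]) t rfl ht
        (fun g hg => hH g (List.mem_cons_of_mem _ hg))
        (fun i hi => by
          obtain ⟨u, hu1, hu2, hu3⟩ := hadj (i+1) (by simp at hi ⊢; omega)
          exact ⟨u, by simpa using hu1, by simpa using hu2, hu3⟩)
        (by simpa [hb] using hxb)
        (by
          have : (e0 :: t).getD ((e0 :: t).length - 1) ∅ = t.getD (t.length - 1) ∅ := by
            have : (e0 :: t).length - 1 = (t.length - 1) + 1 := by simp; omega
            rw [this, List.getD_cons_succ]
          rwa [this] at hw)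
      exact ⟨g, List.mem_cons_of_mem _ hg, hgx, hgw⟩
    · -- erase the edge at position j
      have hlen' : (es.eraseIdx j).length = es.length - 1 := by
        rw [List.length_eraseIdx, if_pos (by omega : j < es.length)]
      obtain ⟨g, hg, hgx, hgw⟩ := ih (es.length - 1) (by omega) (es.eraseIdx j)
        hlen' (by omega)
        (fun g hg => hH g ((List.eraseIdx_sublist es j).mem hg))
        (fun i hi => by
          rw [hlen'] at hi
          rcases lt_trichotomy (i+1) j with hij | hij | hij
          · obtain ⟨hu1, hu2, hu3⟩ := hv i (by omega)
            refine ⟨v i, ?_, ?_, hu3⟩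
            · rw [getD_eraseIdx es j i (by omega) (by omega), if_pos (by omega)]; exact hu1
            · rw [getD_eraseIdx es j (i+1) (by omega) (by omega), if_pos (by omega)]; exact hu2
          · -- i + 1 = j : connect es[j-1] to es[j+1] through v (j-1) = v i
            obtain ⟨hu1, hu2, hu3⟩ := hv i (by omega)
            have hub : v i ∈ b := by
              apply key _ (by rw [ha, ← hij]; exact hu2)
              exact hmin i (by omega)
            refine ⟨v i, ?_, ?_, hu3⟩
            · rw [getD_eraseIdx es j i (by omega) (by omega), if_pos (by omega)]; exact hu1
            · rw [getD_eraseIdx es j (i+1) (by omega) (by omega), if_neg (by omega), hij]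
              exact hub
          · obtain ⟨hu1, hu2, hu3⟩ := hv (i+1) (by omega)
            refine ⟨v (i+1), ?_, ?_, hu3⟩
            · rw [getD_eraseIdx es j i (by omega) (by omega), if_neg (by omega)]; exact hu1
            · rw [getD_eraseIdx es j (i+1) (by omega) (by omega), if_neg (by omega)]; exact hu2)
        (by rw [getD_eraseIdx es j 0 (by omega) (by omega), if_pos (by omega)]; exact hx)
        (by
          rw [hlen', getD_eraseIdx es j (es.length - 1 - 1) (by omega) (by omega),
            if_neg (by omega)]
          have : es.length - 1 - 1 + 1 = es.length - 1 := by omega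
          rw [this]; exact hw)
      exact ⟨g, (List.eraseIdx_sublist es j).mem hg, hgx, hgw⟩
  · -- tail of b included in tail of a
    have key : ∀ u ∈ b, v j ≤ u → u ∈ a := by
      intro u hu hvu
      have := hcase (Finset.mem_filter.mpr ⟨hu, hvu⟩)
      exact (Finset.mem_filter.mp this).1
    have hlen' : (es.eraseIdx (j+1)).length = es.length - 1 := by
      rw [List.length_eraseIdx]; simp [hj1]
    by_cases hjlast : j + 1 = es.length - 1
    · -- the (j+1)-st edge is the last one; w moves into a
      have hwb : w ∈ b := by rw [hb, hjlast]; exact hw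
      have hwa : w ∈ a := key w hwb (le_of_lt (lt_of_le_of_lt hvy hyw))
      obtain ⟨g, hg, hgx, hgw⟩ := ih (es.length - 1) (by omega) (es.eraseIdx (j+1))
        hlen' (by omega)
        (fun g hg => hH g ((List.eraseIdx_sublist es (j+1)).mem hg))
        (fun i hi => by
          rw [hlen'] at hi
          obtain ⟨hu1, hu2, hu3⟩ := hv i (by omega)
          refine ⟨v i, ?_, ?_, hu3⟩
          · rw [getD_eraseIdx es (j+1) i (by omega) (by omega), if_pos (by omega)]; exact hu1
          · rw [getD_eraseIdx es (j+1) (i+1) (by omega) (by omega), if_pos (by omega)]; exact hu2)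
        (by rw [getD_eraseIdx es (j+1) 0 (by omega) (by omega), if_pos (by omega)]; exact hx)
        (by
          rw [hlen', getD_eraseIdx es (j+1) (es.length - 1 - 1) (by omega) (by omega),
            if_pos (by omega)]
          have : es.length - 1 - 1 = j := by omega
          rw [this]; exact hwa)
      exact ⟨g, (List.eraseIdx_sublist es (j+1)).mem hg, hgx, hgw⟩
    · -- erase the edge at position j+1
      obtain ⟨hw1, hw2, hw3⟩ := hv (j+1) (by omega)
      have hwja : v (j+1) ∈ a := by
        apply key _ hw1
        exact hmin (j+1) (by omega)
      obtain ⟨g, hg, hgx, hgw⟩ := ih (es.length - 1) (by omega) (es.eraseIdx (j+1))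
        hlen' (by omega)
        (fun g hg => hH g ((List.eraseIdx_sublist es (j+1)).mem hg))
        (fun i hi => by
          rw [hlen'] at hi
          rcases lt_trichotomy i j with hij | hij | hij
          · obtain ⟨hu1, hu2, hu3⟩ := hv i (by omega)
            refine ⟨v i, ?_, ?_, hu3⟩
            · rw [getD_eraseIdx es (j+1) i (by omega) (by omega), if_pos (by omega)]; exact hu1
            · rw [getD_eraseIdx es (j+1) (i+1) (by omega) (by omega), if_pos (by omega)]; exact hu2
          · -- i = j : connect a to es[j+2] through v (j+1)
            refine ⟨v (j+1), ?_, ?_, hw3⟩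
            · rw [getD_eraseIdx es (j+1) i (by omega) (by omega), if_pos (by omega), hij]
              exact hwja
            · rw [getD_eraseIdx es (j+1) (i+1) (by omega) (by omega), if_neg (by omega), hij]
              exact hw2
          · obtain ⟨hu1, hu2, hu3⟩ := hv (i+1) (by omega)
            refine ⟨v (i+1), ?_, ?_, hu3⟩
            · rw [getD_eraseIdx es (j+1) i (by omega) (by omega), if_neg (by omega)]; exact hu1
            · rw [getD_eraseIdx es (j+1) (i+1) (by omega) (by omega), if_neg (by omega)]; exact hu2)
        (by rw [getD_eraseIdx es (j+1) 0 (by omega) (by omega), if_pos (by omega)]; exact hx)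
        (by
          rw [hlen', getD_eraseIdx es (j+1) (es.length - 1 - 1) (by omega) (by omega),
            if_neg (by omega)]
          have : es.length - 1 - 1 + 1 = es.length - 1 := by omega
          rw [this]; exact hw)
      exact ⟨g, (List.eraseIdx_sublist es (j+1)).mem hg, hgx, hgw⟩

end Helpers


section Main

variable {α : Type*} [LinearOrder α]

private lemma mem_Hex {H : Finset (Finset α)} {e c : Finset α} {x : α} :
    c ∈ Hex H e x ↔ c ∈ H ∧ edgeLE c e ∧ Relation.ReflTransGen (StepBelow H e x) c e := by
  classical
  rw [Hex]
  rw [Finset.filter_congr_decidable]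
  rw [Finset.mem_filter]

private lemma stepBelow_symm {H : Finset (Finset α)} {f : Finset α} {y : α} :
    Symmetric (StepBelow H f y) := by
  rintro p q ⟨h1, h2, h3, h4, v, hv, hvy⟩
  exact ⟨h2, h1, h4, h3, v, by rw [Finset.inter_comm]; exact hv, hvy⟩

private lemma chain_getD_rel {R : Finset α → Finset α → Prop} :
    ∀ (l : List (Finset α)) (a : Finset α), List.Chain R a l →
      ∀ i, i + 1 < (a :: l).length →
        R ((a :: l).getD i ∅) ((a :: l).getD (i+1) ∅)
  | [], _, _, i, h => by simp at h
  | b :: t, a, h, 0, _ => by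
      rw [List.Chain, List.chain_cons] at h
      simpa using h.1
  | b :: t, a, h, i+1, hi => by
      rw [List.Chain, List.chain_cons] at h
      have := chain_getD_rel t b h.2 i (by simpa using hi)
      simpa [List.getD_cons_succ] using this

private lemma chain_mem_Hex {H : Finset (Finset α)} {f : Finset α} {y : α} :
    ∀ (l : List (Finset α)) (a : Finset α), List.Chain (StepBelow H f y) a l →
      a ∈ Hex H f y → ∀ c ∈ a :: l, c ∈ Hex H f y
  | [], a, _, ha, c, hc => by
      rw [List.mem_singleton] at hc; subst hc; exact ha
  | b :: t, a, h, ha, c, hc => by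
      rw [List.Chain, List.chain_cons] at h
      obtain ⟨hstep, hchain⟩ := h
      have haH := mem_Hex.mp ha
      have hbHex : b ∈ Hex H f y :=
        mem_Hex.mpr ⟨hstep.2.1, hstep.2.2.2.1,
          Relation.ReflTransGen.trans
            (Relation.ReflTransGen.single (stepBelow_symm hstep)) haH.2.2⟩
      rcases List.mem_cons.mp hc with rfl | hc
      · exact ha
      · exact chain_mem_Hex t b hchain hbHex c hc

end Main


/-- **Claim 3.** Let `H` be `β`-acyclic with `β`-elimination ordering `≤`, `e ∈ H`,
`x ≤ w`, and `H' := H_e^x \ (H_e^x(x) ∩ H_e^x(w))`. If `y < x` and `f ∈ H` satisfy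
`H_f^y ⊆ H'`, then `{x, w} ∩ V(H_f^y) ≠ {x, w}`. -/
theorem inter_verts_Hex_ne (H : Finset (Finset α)) (hβ : IsBetaElimOrder H)
    (e : Finset α) (he : e ∈ H) (x w : α) (hx : x ∈ verts H) (hw : w ∈ verts H)
    (hxw : x ≤ w) (y : α) (hy : y ∈ verts H) (hyx : y < x) (f : Finset α) (hf : f ∈ H)
    (hsub : Hex H f y ⊆ Hex H e x \
      (((Hex H e x).filter fun g => x ∈ g) ∩ ((Hex H e x).filter fun g => w ∈ g))) :
    ({x, w} : Finset α) ∩ verts (Hex H f y) ≠ {x, w} := by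
  intro hEq
  have hxv : x ∈ verts (Hex H f y) := by
    have hx' : x ∈ ({x, w} : Finset α) ∩ verts (Hex H f y) := by
      rw [hEq]; simp
    exact (Finset.mem_inter.mp hx').2
  have hwv : w ∈ verts (Hex H f y) := by
    have hw' : w ∈ ({x, w} : Finset α) ∩ verts (Hex H f y) := by
      rw [hEq]; simp
    exact (Finset.mem_inter.mp hw').2
  obtain ⟨g, hg, hxg⟩ : ∃ g ∈ Hex H f y, x ∈ g := by
    simpa [verts, Finset.mem_sup] using hxv
  obtain ⟨h, hh, hwh⟩ : ∃ h ∈ Hex H f y, w ∈ h := by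
    simpa [verts, Finset.mem_sup] using hwv
  have hgF := mem_Hex.mp hg
  have hhF := mem_Hex.mp hh
  have hgh : Relation.ReflTransGen (StepBelow H f y) g h :=
    hgF.2.2.trans ((@Relation.ReflTransGen.symmetric _ _ ⟨stepBelow_symm⟩).symm _ _ hhF.2.2)
  obtain ⟨l, hchain, hlast⟩ := List.exists_isChain_cons_of_relationReflTransGen hgh
  set es := g :: l with hes
  have hmemF : ∀ c ∈ es, c ∈ Hex H f y := chain_mem_Hex l g hchain hg
  have hH' : ∀ c ∈ es, c ∈ H := fun c hc => (mem_Hex.mp (hmemF c hc)).1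
  have hadj : ∀ i, i + 1 < es.length →
      ∃ v, v ∈ es.getD i ∅ ∧ v ∈ es.getD (i+1) ∅ ∧ v ≤ y := by
    intro i hi
    obtain ⟨_, _, _, _, v, hv, hvy⟩ := chain_getD_rel l g hchain i hi
    rw [Finset.mem_inter] at hv
    exact ⟨v, hv.1, hv.2, hvy⟩
  have hx0 : x ∈ es.getD 0 ∅ := by simpa [hes] using hxg
  have hwlast : w ∈ es.getD (es.length - 1) ∅ := by
    have h2 : es.getD (es.length - 1) ∅ = es.getLast (by simp [hes]) := by
      rw [List.getLast_eq_getElem, List.getD_eq_getElem _ _ (by simp [hes])]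
    rw [h2]
    have : es.getLast (by simp [hes]) = h := hlast
    rw [this]; exact hwh
  obtain ⟨g', hg'es, hxg', hwg'⟩ := chain_both H hβ y x w hyx (lt_of_lt_of_le hyx hxw)
    es.length es rfl (by simp [hes]) hH' hadj hx0 hwlast
  have hg'F : g' ∈ Hex H f y := hmemF g' hg'es
  have hthis := hsub hg'F
  rw [Finset.mem_sdiff] at hthis
  exact hthis.2 (Finset.mem_inter.mpr ⟨Finset.mem_filter.mpr ⟨hthis.1, hxg'⟩,
    Finset.mem_filter.mpr ⟨hthis.1, hwg'⟩⟩)
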